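/- Let q be odd and ψ a nontrivial additive character of F_q, and fix a nonsquare ξ ∈ F_q×. For a, b, c ∈ F_q, the sum of ψ(-ax - by - cz) over all triples (x,y,z) ∈ F_q³ with y² - xz a nonsquare (i.e., in ξ(F_q×)²) equals: q(q-1)²/2 if a = b = c = 0; -q(q-1)/2 if b² - 4ac = 0 and (a,c) ≠ (0,0); 0 if b² - 4ac is a nonzero square; and q if b² - 4ac is a nonsquare. -/

import Mathlib

open scoped Classical

open Finset AddChar

section Aux

variable {F : Type*} [Field F] [Fintype F]

private noncomputable def qc (F : Type*) [Field F] [Fintype F] : MulChar F ℂ :=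
  (quadraticChar F).ringHomComp (Int.castRingHom ℂ)

private lemma qc_apply (t : F) : qc F t = ((quadraticChar F t : ℤ) : ℂ) := rfl

variable (hF2 : ringChar F ≠ 2)
include hF2

private lemma qc_ne_one : qc F ≠ 1 :=
  (MulChar.ringHomComp_ne_one_iff (f := Int.castRingHom ℂ) Int.cast_injective).mpr
    (quadraticChar_ne_one hF2)

private lemma qc_quad : (qc F).IsQuadratic :=
  (quadraticChar_isQuadratic F).comp _

private lemma qc_self_mul {u : F} (hu : u ≠ 0) : qc F u * qc F u = 1 := by
  rw [qc_apply, ← Int.cast_mul, ← sq, quadraticChar_sq_one hu, Int.cast_one]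

private lemma qc_sq_one {u : F} (hu : u ≠ 0) : qc F (u ^ 2) = 1 := by
  rw [sq, map_mul]; exact qc_self_mul hF2 hu

private lemma qc_inv {u : F} (hu : u ≠ 0) : qc F u⁻¹ = qc F u := by
  have h1 : qc F u⁻¹ * (qc F u * qc F u) = qc F u⁻¹ := by
    rw [qc_self_mul hF2 hu, mul_one]
  calc qc F u⁻¹ = qc F u⁻¹ * qc F u * qc F u := by rw [mul_assoc, h1]
  _ = qc F (u⁻¹ * u) * qc F u := by rw [map_mul]
  _ = qc F u := by rw [inv_mul_cancel₀ hu, map_one, one_mul]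

end Aux

theorem stmt3 {F : Type*} [Field F] [Fintype F] (hq : Odd (Fintype.card F))
    (ψ : AddChar F ℂ) (hψ : ψ ≠ 1) (ξ : F) (hξ0 : ξ ≠ 0) (hξ : ¬ IsSquare ξ)
    (a b c : F) :
    (∑ x : F, ∑ y : F, ∑ z : F,
        if ¬ IsSquare (y ^ 2 - x * z)
        then ψ (-(a * x) - b * y - c * z) else 0) =
      if a = 0 ∧ b = 0 ∧ c = 0 then
        (Fintype.card F : ℂ) * ((Fintype.card F : ℂ) - 1) ^ 2 / 2
      else if b ^ 2 - 4 * a * c = 0 ∧ (a, c) ≠ ((0 : F), (0 : F)) then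
        -((Fintype.card F : ℂ) * ((Fintype.card F : ℂ) - 1) / 2)
      else if IsSquare (b ^ 2 - 4 * a * c) then 0
      else (Fintype.card F : ℂ) := by
  have hF2 : ringChar F ≠ 2 := by
    intro h
    have h1 := FiniteField.even_card_of_char_two h
    have h2 := Nat.odd_iff.mp hq
    omega
  set q : ℂ := (Fintype.card F : ℂ) with hqdef
  have h2 : (2 : F) ≠ 0 := Ring.two_ne_zero hF2
  have h4 : (4 : F) ≠ 0 := by
    have h44 : (4 : F) = 2 * 2 := by norm_num
    rw [h44]; exact mul_ne_zero h2 h2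
  set χ : MulChar F ℂ := qc F with hχdef
  have hψp : ψ.IsPrimitive := AddChar.IsPrimitive.of_ne_one hψ
  set g : ℂ := gaussSum χ ψ with hgdef
  have hg2 : g * g = χ (-1) * q := by
    rw [← sq, hgdef, hχdef]
    exact gaussSum_sq (qc_ne_one hF2) (qc_quad hF2) hψp
  have hm1 : χ (-1) * χ (-1) = 1 := by
    rw [hχdef]; exact qc_self_mul hF2 (neg_ne_zero.mpr one_ne_zero)
  -- basic character sums
  have S1 : ∀ u : F, ∑ x : F, ψ (x * u) = if u = 0 then q else 0 := by
    intro u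
    rw [AddChar.sum_mulShift u hψp]
    simp [apply_ite (Nat.cast : ℕ → ℂ), hqdef]
  have Sdiff : ∀ u : F, ∑ z ∈ univ \ {(0 : F)}, ψ (z * u)
      = (if u = 0 then q else 0) - 1 := by
    intro u
    have h := Finset.sum_eq_sum_sdiff_singleton_add (mem_univ (0 : F))
      (fun z : F => ψ (z * u))
    have h0 : ψ ((0 : F) * u) = 1 := by rw [zero_mul, map_zero_eq_one]
    rw [S1 u, h0] at h
    exact eq_sub_of_add_eq h.symm
  have S2 : ∀ u : F, ∑ t : F, χ t * ψ (t * u) = χ u * g := by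
    intro u
    rcases eq_or_ne u 0 with rfl | hu
    · simp only [mul_zero, map_zero_eq_one, mul_one]
      rw [hχdef, MulChar.sum_eq_zero_of_ne_one (qc_ne_one hF2), MulChar.map_zero, zero_mul]
    · have h : χ u * gaussSum χ (ψ.mulShift u) = g := gaussSum_mulShift χ ψ (Units.mk0 u hu)
      have h1 : gaussSum χ (ψ.mulShift u) = ∑ t : F, χ t * ψ (t * u) := by
        simp only [gaussSum, mulShift_apply]
        exact Finset.sum_congr rfl fun t _ => by rw [mul_comm t u]
      rw [h1] at h
      calc ∑ t : F, χ t * ψ (t * u)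
          = (χ u * χ u) * ∑ t : F, χ t * ψ (t * u) := by
            rw [hχdef, qc_self_mul hF2 hu, one_mul]
      _ = χ u * g := by rw [mul_assoc, h]
  have S3 : ∀ s : F, s ≠ 0 → ∑ y : F, ψ (s * y ^ 2) = χ s * g := by
    intro s hs
    have hfib := Finset.sum_fiberwise_of_maps_to' (s := (univ : Finset F))
      (t := (univ : Finset F)) (g := fun y : F => y ^ 2)
      (fun _ _ => mem_univ _) (fun t => ψ (s * t))
    rw [← hfib]
    have hcard : ∀ t : F, (((univ : Finset F).filter (fun y : F => y ^ 2 = t)).card : ℂ)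
        = χ t + 1 := by
      intro t
      have h := quadraticChar_card_sqrts hF2 t
      rw [Set.toFinset_setOf] at h
      rw [hχdef, qc_apply]
      exact_mod_cast congrArg (Int.cast : ℤ → ℂ) h
    calc ∑ t : F, ∑ y ∈ (univ : Finset F).filter (fun y : F => y ^ 2 = t), ψ (s * t)
        = ∑ t : F, (χ t + 1) * ψ (s * t) := by
          refine Finset.sum_congr rfl fun t _ => ?_
          rw [Finset.sum_const, ← hcard t, nsmul_eq_mul]
    _ = (∑ t : F, χ t * ψ (t * s)) + ∑ t : F, ψ (t * s) := by
          rw [← Finset.sum_add_distrib]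
          exact Finset.sum_congr rfl fun t _ => by rw [add_mul, one_mul, mul_comm s t]
    _ = χ s * g := by rw [S2 s, S1 s, if_neg hs, add_zero]
  have S4 : ∀ s : F, s ≠ 0 → ∀ B : F, ∑ y : F, ψ (s * y ^ 2 + B * y)
      = χ s * g * ψ (-(B ^ 2 / (4 * s))) := by
    intro s hs B
    have hkey := Fintype.sum_bijective (fun y : F => y - B / (2 * s))
      (Equiv.subRight (B / (2 * s))).bijective
      (fun y => ψ (s * (y - B / (2 * s)) ^ 2 + B * (y - B / (2 * s))))
      (fun y => ψ (s * y ^ 2 + B * y)) (fun y => rfl)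
    rw [← hkey]
    have harg : ∀ y : F, s * (y - B / (2 * s)) ^ 2 + B * (y - B / (2 * s))
        = s * y ^ 2 + -(B ^ 2 / (4 * s)) := by
      intro y; field_simp; ring
    calc ∑ y : F, ψ (s * (y - B / (2 * s)) ^ 2 + B * (y - B / (2 * s)))
        = ∑ y : F, ψ (s * y ^ 2) * ψ (-(B ^ 2 / (4 * s))) := by
          refine Finset.sum_congr rfl fun y _ => ?_
          rw [harg y, map_add_eq_mul]
    _ = χ s * g * ψ (-(B ^ 2 / (4 * s))) := by rw [← Finset.sum_mul, S3 s hs]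
  have swap3 : ∀ f : F → F → F → ℂ,
      (∑ x : F, ∑ y : F, ∑ z : F, f x y z) = ∑ z : F, ∑ y : F, ∑ x : F, f x y z := by
    intro f
    calc (∑ x : F, ∑ y : F, ∑ z : F, f x y z)
        = ∑ x : F, ∑ z : F, ∑ y : F, f x y z :=
          Finset.sum_congr rfl fun x _ => Finset.sum_comm
    _ = ∑ z : F, ∑ x : F, ∑ y : F, f x y z := Finset.sum_comm
    _ = ∑ z : F, ∑ y : F, ∑ x : F, f x y z :=
          Finset.sum_congr rfl fun z _ => Finset.sum_comm
  -- the plain sum A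
  have hA : (∑ x : F, ∑ y : F, ∑ z : F, ψ (-(a * x) - b * y - c * z))
      = (if a = 0 then q else 0) * ((if b = 0 then q else 0) * (if c = 0 then q else 0)) := by
    have hsplit : ∀ x y z : F, ψ (-(a * x) - b * y - c * z)
        = ψ (x * (-a)) * (ψ (y * (-b)) * ψ (z * (-c))) := by
      intro x y z
      rw [← map_add_eq_mul, ← map_add_eq_mul]
      congr 1; ring
    simp_rw [hsplit, ← Finset.mul_sum, ← Finset.sum_mul]
    rw [S1, S1, S1]
    simp only [neg_eq_zero]
  -- inner x-substitution for T
  have hsubT : ∀ y z : F, z ≠ 0 →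
      ∑ x : F, χ (y ^ 2 - x * z) * ψ (x * (-a))
        = ψ (y ^ 2 * (-a / z)) * (χ (a / z) * g) := by
    intro y z hz
    have hbij : Function.Bijective (fun x : F => y ^ 2 - x * z) := by
      refine Function.bijective_iff_has_inverse.mpr
        ⟨fun t => (y ^ 2 - t) / z, fun x => ?_, fun t => ?_⟩
      · field_simp; ring
      · field_simp; ring
    rw [Fintype.sum_bijective _ hbij _
      (fun t => χ t * (ψ (y ^ 2 * (-a / z)) * ψ (t * (a / z))))
      (fun x => by
        congr 1
        rw [← map_add_eq_mul]
        congr 1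
        field_simp
        ring)]
    calc ∑ t : F, χ t * (ψ (y ^ 2 * (-a / z)) * ψ (t * (a / z)))
        = ∑ t : F, ψ (y ^ 2 * (-a / z)) * (χ t * ψ (t * (a / z))) := by
          refine Finset.sum_congr rfl fun t _ => by ring
    _ = ψ (y ^ 2 * (-a / z)) * (χ (a / z) * g) := by rw [← Finset.mul_sum, S2]
  -- per-z value of the χ-twisted triple sum, z ≠ 0
  have hTz : ∀ z : F, z ≠ 0 →
      ∑ y : F, ∑ x : F, χ (y ^ 2 - x * z) * ψ (-(a * x) - b * y - c * z)
        = χ (a / z) * g * ψ (z * (-c)) * ∑ y : F, ψ (-a / z * y ^ 2 + -b * y) := by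
    intro z hz
    calc ∑ y : F, ∑ x : F, χ (y ^ 2 - x * z) * ψ (-(a * x) - b * y - c * z)
        = ∑ y : F, (∑ x : F, χ (y ^ 2 - x * z) * ψ (x * (-a)))
            * (ψ (y * (-b)) * ψ (z * (-c))) := by
          refine Finset.sum_congr rfl fun y _ => ?_
          rw [Finset.sum_mul]
          refine Finset.sum_congr rfl fun x _ => ?_
          rw [mul_assoc, ← map_add_eq_mul, ← map_add_eq_mul]
          congr 2
          ring
    _ = ∑ y : F, (χ (a / z) * g * ψ (z * (-c))) * ψ (-a / z * y ^ 2 + -b * y) := by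
          refine Finset.sum_congr rfl fun y _ => ?_
          rw [hsubT y z hz, map_add_eq_mul,
            show ψ (-a / z * y ^ 2) = ψ (y ^ 2 * (-a / z)) by rw [mul_comm],
            show ψ (-b * y) = ψ (y * (-b)) by rw [mul_comm]]
          ring
    _ = χ (a / z) * g * ψ (z * (-c)) * ∑ y : F, ψ (-a / z * y ^ 2 + -b * y) := by
          rw [← Finset.mul_sum]
  -- z = 0 term of T
  have hT0 : ∑ y : F, ∑ x : F, χ (y ^ 2 - x * 0) * ψ (-(a * x) - b * y - c * 0)
      = ((if b = 0 then q else 0) - 1) * (if a = 0 then q else 0) := by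
    calc ∑ y : F, ∑ x : F, χ (y ^ 2 - x * 0) * ψ (-(a * x) - b * y - c * 0)
        = ∑ y : F, (χ (y ^ 2) * ψ (y * (-b))) * ∑ x : F, ψ (x * (-a)) := by
          refine Finset.sum_congr rfl fun y _ => ?_
          rw [Finset.mul_sum]
          refine Finset.sum_congr rfl fun x _ => ?_
          rw [mul_zero, sub_zero, mul_assoc,
            show ψ (-(a * x) - b * y - c * 0) = ψ (y * (-b)) * ψ (x * (-a)) by
              rw [← map_add_eq_mul]; congr 1; ring]
    _ = (∑ y : F, χ (y ^ 2) * ψ (y * (-b))) * (if a = 0 then q else 0) := by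
          rw [← Finset.sum_mul, S1, neg_eq_zero]
    _ = ((if b = 0 then q else 0) - 1) * (if a = 0 then q else 0) := by
          congr 1
          have h := Finset.sum_eq_sum_sdiff_singleton_add (mem_univ (0 : F))
            (fun y : F => χ (y ^ 2) * ψ (y * (-b)))
          have h0 : χ ((0 : F) ^ 2) * ψ ((0 : F) * (-b)) = 0 := by
            rw [hχdef]
            simp [MulChar.map_zero]
          rw [h0, add_zero] at h
          have hsum : ∑ y ∈ univ \ {(0 : F)}, χ (y ^ 2) * ψ (y * (-b))
              = ∑ y ∈ univ \ {(0 : F)}, ψ (y * (-b)) := by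
            refine Finset.sum_congr rfl fun y hy => ?_
            have hy0 : y ≠ 0 := by
              rw [Finset.mem_sdiff, Finset.mem_singleton] at hy
              exact hy.2
            rw [hχdef, qc_sq_one hF2 hy0, one_mul]
          rw [h, hsum, Sdiff, neg_eq_zero]
  -- the χ-twisted triple sum T
  have hT : (∑ x : F, ∑ y : F, ∑ z : F, χ (y ^ 2 - x * z) * ψ (-(a * x) - b * y - c * z))
      = q * ((if b ^ 2 - 4 * a * c = 0 then q else 0) - 1) := by
    rw [swap3 (fun x y z => χ (y ^ 2 - x * z) * ψ (-(a * x) - b * y - c * z)),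
      Finset.sum_eq_sum_sdiff_singleton_add (mem_univ (0 : F))]
    by_cases ha : a = 0
    · subst ha
      have hzero : ∀ z ∈ univ \ {(0 : F)},
          (∑ y : F, ∑ x : F, χ (y ^ 2 - x * z) * ψ (-(0 * x) - b * y - c * z)) = 0 := by
        intro z hz'
        have hz : z ≠ 0 := by
          rw [Finset.mem_sdiff, Finset.mem_singleton] at hz'; exact hz'.2
        rw [hTz z hz, hχdef]
        simp [MulChar.map_zero]
      rw [Finset.sum_eq_zero hzero, zero_add, hT0, if_pos rfl]
      have hb2 : (b ^ 2 - 4 * 0 * c = 0) ↔ b = 0 := by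
        constructor
        · intro h
          have hb2 : b ^ 2 = 0 := by linear_combination h
          exact pow_eq_zero_iff two_ne_zero |>.mp hb2
        · intro h; rw [h]; ring
      by_cases hb : b = 0
      · rw [if_pos hb, if_pos (hb2.mpr hb)]; ring
      · rw [if_neg hb, if_neg (fun h => hb (hb2.mp h))]; ring
    · have he : (b ^ 2 / (4 * a) - c = 0) ↔ b ^ 2 - 4 * a * c = 0 := by
        rw [sub_eq_zero, div_eq_iff (mul_ne_zero h4 ha), sub_eq_zero]
        constructor <;> intro h <;> linear_combination h
      have hstep : ∀ z ∈ univ \ {(0 : F)},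
          (∑ y : F, ∑ x : F, χ (y ^ 2 - x * z) * ψ (-(a * x) - b * y - c * z))
            = q * ψ (z * (b ^ 2 / (4 * a) - c)) := by
        intro z hz'
        have hz : z ≠ 0 := by
          rw [Finset.mem_sdiff, Finset.mem_singleton] at hz'; exact hz'.2
        have hs : -a / z ≠ 0 := div_ne_zero (neg_ne_zero.mpr ha) hz
        rw [hTz z hz, S4 (-a / z) hs (-b)]
        have h1 : χ (a / z) * χ (-a / z) = χ (-1) := by
          rw [← map_mul, show a / z * (-a / z) = -1 * (a / z) ^ 2 by ring, map_mul,
            hχdef, qc_sq_one hF2 (div_ne_zero ha hz), mul_one]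
        have h2' : ψ (z * (-c)) * ψ (-((-b) ^ 2 / (4 * (-a / z))))
            = ψ (z * (b ^ 2 / (4 * a) - c)) := by
          rw [← map_add_eq_mul]
          congr 1
          field_simp
          ring
        calc χ (a / z) * g * ψ (z * (-c)) * (χ (-a / z) * g * ψ (-((-b) ^ 2 / (4 * (-a / z)))))
            = (χ (a / z) * χ (-a / z)) * (g * g)
                * (ψ (z * (-c)) * ψ (-((-b) ^ 2 / (4 * (-a / z))))) := by ring
        _ = χ (-1) * (χ (-1) * q) * ψ (z * (b ^ 2 / (4 * a) - c)) := by
              rw [h1, h2', hg2]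
        _ = q * ψ (z * (b ^ 2 / (4 * a) - c)) := by
              rw [← mul_assoc, hm1, one_mul]
      rw [Finset.sum_congr rfl hstep, hT0, if_neg ha, mul_zero, add_zero, ← Finset.mul_sum,
        Sdiff]
      by_cases hD : b ^ 2 - 4 * a * c = 0
      · rw [if_pos (he.mpr hD), if_pos hD]
      · rw [if_neg (fun h => hD (he.mp h)), if_neg hD]
  -- the cone sum U
  have hU : (∑ x : F, ∑ y : F, ∑ z : F,
      if y ^ 2 - x * z = 0 then ψ (-(a * x) - b * y - c * z) else 0)
      = if a = 0 ∧ b = 0 ∧ c = 0 then q ^ 2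
        else if b ^ 2 - 4 * a * c = 0 then 0
        else q * χ (b ^ 2 - 4 * a * c) := by
    rw [swap3 (fun x y z => if y ^ 2 - x * z = 0 then ψ (-(a * x) - b * y - c * z) else 0),
      Finset.sum_eq_sum_sdiff_singleton_add (mem_univ (0 : F))]
    have hU0 : (∑ y : F, ∑ x : F,
        if y ^ 2 - x * 0 = 0 then ψ (-(a * x) - b * y - c * 0) else 0)
        = if a = 0 then q else 0 := by
      have hy : ∀ y : F, (∑ x : F,
          if y ^ 2 - x * 0 = 0 then ψ (-(a * x) - b * y - c * 0) else 0)
          = if y = 0 then (∑ x : F, ψ (x * (-a))) else 0 := by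
        intro y
        rcases eq_or_ne y 0 with rfl | hy0
        · rw [if_pos rfl]
          refine Finset.sum_congr rfl fun x _ => ?_
          rw [if_pos (by ring)]
          congr 1; ring
        · rw [if_neg hy0, Finset.sum_eq_zero]
          intro x _
          rw [if_neg]
          intro hcon
          exact hy0 (pow_eq_zero_iff two_ne_zero |>.mp (by linear_combination hcon))
      rw [Finset.sum_congr rfl fun y _ => hy y, Finset.sum_ite_eq' univ (0 : F) _,
        if_pos (mem_univ _), S1, neg_eq_zero]
    have hUz : ∀ z : F, z ≠ 0 →
        (∑ y : F, ∑ x : F, if y ^ 2 - x * z = 0 then ψ (-(a * x) - b * y - c * z) else 0)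
          = (∑ y : F, ψ (-a / z * y ^ 2 + -b * y)) * ψ (z * (-c)) := by
      intro z hz
      have hx : ∀ y : F, (∑ x : F,
          if y ^ 2 - x * z = 0 then ψ (-(a * x) - b * y - c * z) else 0)
          = ψ (-a / z * y ^ 2 + -b * y) * ψ (z * (-c)) := by
        intro y
        have hcond : ∀ x : F, (y ^ 2 - x * z = 0) = (x = y ^ 2 / z) := by
          intro x
          rw [sub_eq_zero]
          exact propext (eq_comm.trans (eq_div_iff hz).symm)
        simp only [hcond]
        rw [Finset.sum_ite_eq' univ (y ^ 2 / z)
          (fun x => ψ (-(a * x) - b * y - c * z)), if_pos (mem_univ _), ← map_add_eq_mul]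
        congr 1
        field_simp
        ring
      rw [Finset.sum_congr rfl fun y _ => hx y, ← Finset.sum_mul]
    by_cases ha : a = 0
    · subst ha
      have hstep : ∀ z ∈ univ \ {(0 : F)},
          (∑ y : F, ∑ x : F, if y ^ 2 - x * z = 0 then ψ (-(0 * x) - b * y - c * z) else 0)
            = (if b = 0 then q else 0) * ψ (z * (-c)) := by
        intro z hz'
        have hz : z ≠ 0 := by
          rw [Finset.mem_sdiff, Finset.mem_singleton] at hz'; exact hz'.2
        rw [hUz z hz]
        congr 1
        calc ∑ y : F, ψ (-0 / z * y ^ 2 + -b * y) = ∑ y : F, ψ (y * (-b)) := by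
              refine Finset.sum_congr rfl fun y _ => ?_
              congr 1
              rw [neg_zero, zero_div, zero_mul, zero_add, mul_comm]
        _ = if b = 0 then q else 0 := by rw [S1, neg_eq_zero]
      rw [Finset.sum_congr rfl hstep, hU0, if_pos rfl, ← Finset.mul_sum, Sdiff, neg_eq_zero]
      by_cases hb : b = 0
      · by_cases hc : c = 0
        · rw [if_pos hb, if_pos hc, if_pos ⟨rfl, hb, hc⟩]; ring
        · rw [if_pos hb, if_neg hc, if_neg (show ¬((0:F) = 0 ∧ b = 0 ∧ c = 0) from fun h => hc h.2.2),
            if_pos (by rw [hb]; ring)]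
          ring
      · have hD : b ^ 2 - 4 * 0 * c ≠ 0 := by
          intro h
          exact hb (pow_eq_zero_iff two_ne_zero |>.mp (by linear_combination h))
        rw [if_neg hb, if_neg (show ¬((0:F) = 0 ∧ b = 0 ∧ c = 0) from fun h => hb h.2.1), if_neg hD, zero_mul, zero_add,
          show b ^ 2 - 4 * 0 * c = b ^ 2 by ring, hχdef, qc_sq_one hF2 hb, mul_one]
    · have hstep : ∀ z ∈ univ \ {(0 : F)},
          (∑ y : F, ∑ x : F, if y ^ 2 - x * z = 0 then ψ (-(a * x) - b * y - c * z) else 0)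
            = (χ (-a) * g) * (χ z * ψ (z * (b ^ 2 / (4 * a) - c))) := by
        intro z hz'
        have hz : z ≠ 0 := by
          rw [Finset.mem_sdiff, Finset.mem_singleton] at hz'; exact hz'.2
        have hs : -a / z ≠ 0 := div_ne_zero (neg_ne_zero.mpr ha) hz
        rw [hUz z hz, S4 (-a / z) hs (-b)]
        have h1 : χ (-a / z) = χ (-a) * χ z := by
          rw [div_eq_mul_inv, map_mul, hχdef, qc_inv hF2 hz]
        have h2' : ψ (-((-b) ^ 2 / (4 * (-a / z)))) * ψ (z * (-c))
            = ψ (z * (b ^ 2 / (4 * a) - c)) := by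
          rw [← map_add_eq_mul]
          congr 1
          field_simp
          ring
        calc χ (-a / z) * g * ψ (-((-b) ^ 2 / (4 * (-a / z)))) * ψ (z * (-c))
            = χ (-a / z) * g * (ψ (-((-b) ^ 2 / (4 * (-a / z)))) * ψ (z * (-c))) := by ring
        _ = (χ (-a) * g) * (χ z * ψ (z * (b ^ 2 / (4 * a) - c))) := by
              rw [h1, h2']; ring
      rw [Finset.sum_congr rfl hstep, hU0, if_neg ha, add_zero, ← Finset.mul_sum]
      have hfull : ∑ z ∈ univ \ {(0 : F)}, χ z * ψ (z * (b ^ 2 / (4 * a) - c))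
          = χ (b ^ 2 / (4 * a) - c) * g := by
        have h := Finset.sum_eq_sum_sdiff_singleton_add (mem_univ (0 : F))
          (fun z : F => χ z * ψ (z * (b ^ 2 / (4 * a) - c)))
        have h0 : χ (0 : F) * ψ ((0 : F) * (b ^ 2 / (4 * a) - c)) = 0 := by
          rw [hχdef]; simp [MulChar.map_zero]
        rw [h0, add_zero] at h
        rw [← h, S2]
      rw [hfull]
      have hae : χ (-a) * g * (χ (b ^ 2 / (4 * a) - c) * g)
          = q * χ (a * (b ^ 2 / (4 * a) - c)) := by
        calc χ (-a) * g * (χ (b ^ 2 / (4 * a) - c) * g)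
            = (χ (-a) * χ (b ^ 2 / (4 * a) - c)) * (g * g) := by ring
        _ = χ (-a) * χ (b ^ 2 / (4 * a) - c) * (χ (-1) * q) := by rw [hg2]
        _ = q * (χ (-1) * χ (-1)) * (χ a * χ (b ^ 2 / (4 * a) - c)) := by
              rw [show (-a : F) = -1 * a by ring, map_mul]; ring
        _ = q * χ (a * (b ^ 2 / (4 * a) - c)) := by rw [hm1, map_mul]; ring
      rw [hae, if_neg (show ¬(a = 0 ∧ b = 0 ∧ c = 0) from fun h => ha h.1)]
      by_cases hD : b ^ 2 - 4 * a * c = 0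
      · have h0 : a * (b ^ 2 / (4 * a) - c) = 0 := by
          have hb2 : b ^ 2 = 4 * a * c := by linear_combination hD
          rw [hb2, mul_div_cancel_left₀ c (mul_ne_zero h4 ha), sub_self, mul_zero]
        rw [if_pos hD, h0, hχdef, MulChar.map_zero, mul_zero]
      · have hae2 : χ (a * (b ^ 2 / (4 * a) - c)) = χ (b ^ 2 - 4 * a * c) := by
          have h0 : a * (b ^ 2 / (4 * a) - c) = (b ^ 2 - 4 * a * c) * ((2 : F)⁻¹) ^ 2 := by
            field_simp
            ring
          rw [h0, map_mul, hχdef, qc_sq_one hF2 (inv_ne_zero h2), mul_one]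
        rw [if_neg hD, hae2]
  -- pointwise decomposition of the nonsquare indicator
  have hpoint : ∀ (t : F) (w : ℂ),
      (if ¬ IsSquare t then w else 0)
        = (w - χ t * w - (if t = 0 then w else 0)) / 2 := by
    intro t w
    rcases eq_or_ne t 0 with rfl | h0
    · rw [if_neg (show ¬ ¬ IsSquare (0 : F) from fun h => h IsSquare.zero),
        if_pos rfl, hχdef, MulChar.map_zero]
      ring
    · rw [if_neg h0]
      by_cases hsq : IsSquare t
      · have hχ1 : χ t = 1 := by
          rw [hχdef, qc_apply, (quadraticChar_one_iff_isSquare h0).mpr hsq]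
          norm_num
        rw [if_neg (fun h => h hsq), hχ1]
        ring
      · have hχm : χ t = -1 := by
          rw [hχdef, qc_apply, quadraticChar_neg_one_iff_not_isSquare.mpr hsq]
          norm_num
        rw [if_pos hsq, hχm]
        ring
  have hdecomp : (∑ x : F, ∑ y : F, ∑ z : F,
      if ¬ IsSquare (y ^ 2 - x * z) then ψ (-(a * x) - b * y - c * z) else 0)
      = ((∑ x : F, ∑ y : F, ∑ z : F, ψ (-(a * x) - b * y - c * z))
        - (∑ x : F, ∑ y : F, ∑ z : F, χ (y ^ 2 - x * z) * ψ (-(a * x) - b * y - c * z))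
        - (∑ x : F, ∑ y : F, ∑ z : F,
            if y ^ 2 - x * z = 0 then ψ (-(a * x) - b * y - c * z) else 0)) / 2 := by
    simp_rw [hpoint, ← Finset.sum_div, Finset.sum_sub_distrib]
  rw [hdecomp, hA, hT, hU]
  by_cases h1 : a = 0 ∧ b = 0 ∧ c = 0
  · obtain ⟨rfl, rfl, rfl⟩ := h1
    have hD0 : (0 : F) ^ 2 - 4 * 0 * 0 = 0 := by ring
    rw [if_pos hD0, if_pos (⟨rfl, rfl, rfl⟩ : (0:F) = 0 ∧ (0:F) = 0 ∧ (0:F) = 0),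
      if_pos (rfl : (0:F) = 0),
      if_pos (⟨rfl, rfl, rfl⟩ : (0:F) = 0 ∧ (0:F) = 0 ∧ (0:F) = 0)]
    ring
  · rw [if_neg h1, if_neg h1]
    have hAzero : (if a = 0 then q else 0)
        * ((if b = 0 then q else 0) * (if c = 0 then q else 0)) = 0 := by
      by_cases haz : a = 0
      · by_cases hbz : b = 0
        · have hcz : ¬ c = 0 := fun hcz => h1 ⟨haz, hbz, hcz⟩
          rw [if_neg hcz, mul_zero, mul_zero]
        · rw [if_neg hbz, zero_mul, mul_zero]
      · rw [if_neg haz, zero_mul]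
    rw [hAzero]
    by_cases hD : b ^ 2 - 4 * a * c = 0
    · have hac : (a, c) ≠ ((0 : F), (0 : F)) := by
        intro hpair
        have ha0 : a = 0 := congrArg Prod.fst hpair
        have hc0 : c = 0 := congrArg Prod.snd hpair
        apply h1
        refine ⟨ha0, ?_, hc0⟩
        have hb2 : b ^ 2 = 0 := by
          rw [ha0] at hD
          linear_combination hD
        exact pow_eq_zero_iff two_ne_zero |>.mp hb2
      rw [if_pos hD, if_pos hD,
        if_pos (show b ^ 2 - 4 * a * c = 0 ∧ (a, c) ≠ ((0 : F), (0 : F)) from ⟨hD, hac⟩)]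
      ring
    · rw [if_neg hD, if_neg hD, if_neg (show ¬(b ^ 2 - 4 * a * c = 0
        ∧ (a, c) ≠ ((0 : F), (0 : F))) from fun h => hD h.1)]
      by_cases hsq : IsSquare (b ^ 2 - 4 * a * c)
      · rw [if_pos hsq]
        have hχ1 : χ (b ^ 2 - 4 * a * c) = 1 := by
          rw [hχdef, qc_apply, (quadraticChar_one_iff_isSquare hD).mpr hsq]
          norm_num
        rw [hχ1]
        ring
      · rw [if_neg hsq]
        have hχm : χ (b ^ 2 - 4 * a * c) = -1 := by
          rw [hχdef, qc_apply, quadraticChar_neg_one_iff_not_isSquare.mpr hsq]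
          norm_num
        rw [hχm]
        ring
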